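/- Let E be an analytic equivalence relation on a Polish space Y. Either E₀ ≤_B E, or every Borel homomorphism f : E₀ →_B E maps a comeager subset of 2^ℕ into a single E-class. -/

import Mathlib

open MeasureTheory

/-- Eventual equality on Cantor space `2^ℕ`. -/
def E0 (x y : ℕ → Bool) : Prop := ∃ N, ∀ n ≥ N, x n = y n

section Auxiliary

open Set Filter Topology TopologicalSpace

variable {α : Type*} [TopologicalSpace α]

lemma isMeagre_iUnion' {ι : Sort*} [Countable ι] {s : ι → Set α}
    (hs : ∀ i, IsMeagre (s i)) : IsMeagre (⋃ i, s i) := by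
  rw [IsMeagre, compl_iUnion]
  exact countable_iInter_mem.mpr hs

lemma isMeagre_of_compl_mem {s : Set α} (h : sᶜ ∈ residual α) : IsMeagre s := h

section Hull
variable [SecondCountableTopology α]

/-- Baire hull: every set is contained in a Baire measurable set which is minimal
modulo meager sets. -/
lemma exists_baire_hull (S : Set α) :
    ∃ B : Set α, BaireMeasurableSet B ∧ S ⊆ B ∧
      ∀ Z : Set α, BaireMeasurableSet Z → S ⊆ Z → IsMeagre (B \ Z) := by
  classical
  set b := countableBasis α with hb
  set 𝒱 : Set (Set α) := {V | V ∈ b ∧ IsMeagre (S ∩ V)} with h𝒱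
  set W : Set α := ⋃₀ 𝒱 with hW
  have hWopen : IsOpen W :=
    isOpen_sUnion fun V hV => (isBasis_countableBasis α).isOpen hV.1
  have hSW : IsMeagre (S ∩ W) := by
    have hcnt : Countable 𝒱 := ((countable_countableBasis α).mono
      (fun V hV => hV.1)).to_subtype
    have heq : S ∩ W = ⋃ V : 𝒱, (S ∩ V.1) := by
      ext x
      simp only [hW, mem_inter_iff, mem_sUnion, mem_iUnion]
      constructor
      · rintro ⟨hxS, V, hV, hxV⟩; exact ⟨⟨V, hV⟩, hxS, hxV⟩
      · rintro ⟨⟨V, hV⟩, hxS, hxV⟩; exact ⟨hxS, V, hV, hxV⟩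
    rw [heq]
    exact isMeagre_iUnion' fun V => V.2.2
  refine ⟨Wᶜ ∪ S, ?_, fun x hx => Or.inr hx, ?_⟩
  · have h1 : BaireMeasurableSet (Wᶜ ∪ (S ∩ W)) :=
      (hWopen.baireMeasurableSet.compl).union hSW.baireMeasurableSet
    have : Wᶜ ∪ S = Wᶜ ∪ (S ∩ W) := by
      ext x; by_cases hx : x ∈ W <;> simp [hx]
    rw [this]; exact h1
  · intro Z hZ hSZ
    obtain ⟨U, hUopen, hZU⟩ := hZ.compl.residualEq_isOpen
    have hres : {x | x ∈ Zᶜ ↔ x ∈ U} ∈ residual α := by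
      rw [Filter.eventuallyEq_set] at hZU; exact hZU
    have hUW : U ⊆ W := by
      intro x hxU
      obtain ⟨V, hVb, hxV, hVU⟩ :=
        (isBasis_countableBasis α).exists_subset_of_mem_open hxU hUopen
      refine mem_sUnion.2 ⟨V, ⟨hVb, ?_⟩, hxV⟩
      refine isMeagre_of_compl_mem (s := S ∩ V) (Filter.mem_of_superset hres ?_)
      intro y hy
      simp only [mem_setOf_eq, mem_compl_iff] at hy
      simp only [mem_compl_iff, mem_inter_iff, not_and]
      intro hyS hyV
      exact (hy.mpr (hVU hyV)) (hSZ hyS)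
    have hmeag : IsMeagre (Zᶜ ∩ Wᶜ) := by
      refine isMeagre_of_compl_mem (Filter.mem_of_superset hres ?_)
      intro y hy
      simp only [mem_setOf_eq, mem_compl_iff] at hy
      simp only [mem_compl_iff, mem_inter_iff, not_and, not_not]
      intro hyZc
      by_contra hyW
      exact hyW (hUW (hy.mp hyZc))
    refine hmeag.mono ?_
    rintro x ⟨hxB, hxZ⟩
    rcases hxB with hxW | hxS
    · exact ⟨hxZ, hxW⟩
    · exact absurd (hSZ hxS) hxZ
end Hull


/-- In a product of discrete spaces over `ℕ`, cylinders around a point form a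
neighborhood basis. -/
lemma pi_nbhd {β : Type*} [TopologicalSpace β] [DiscreteTopology β] {U : Set (ℕ → β)}
    (hU : IsOpen U) {x : ℕ → β} (hx : x ∈ U) :
    ∃ n : ℕ, ∀ y : ℕ → β, (∀ i, i < n → y i = x i) → y ∈ U := by
  obtain ⟨I, u, hIu, hpi⟩ := isOpen_pi_iff.1 hU x hx
  refine ⟨(I.sup id) + 1, fun y hy => hpi ?_⟩
  intro a ha
  have : a ≤ I.sup id := Finset.le_sup (f := id) ha
  rw [hy a (Nat.lt_succ_of_le this)]
  exact (hIu a ha).2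

/-- Cylinder in Baire space `ℕ → ℕ` given by a finite list. -/
def cylN (s : List ℕ) : Set (ℕ → ℕ) := {x | ∀ i, i < s.length → x i = s.getD i 0}

lemma cylN_append_mem {s : List ℕ} {x : ℕ → ℕ} (hx : x ∈ cylN s) :
    x ∈ cylN (s ++ [x s.length]) := by
  intro i hi
  simp only [List.length_append, List.length_singleton] at hi
  rcases Nat.lt_or_ge i s.length with h | h
  · rw [List.getD_append _ _ _ _ h]
    exact hx i h
  · have hieq : i = s.length := by omega
    subst hieq
    rw [List.getD_append_right _ _ _ _ h]
    simp

theorem analyticSet_baireMeasurable {α : Type*} [TopologicalSpace α] [T3Space α]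
    [SecondCountableTopology α] {A : Set α} (hA : MeasureTheory.AnalyticSet A) :
    BaireMeasurableSet A := by
  rw [MeasureTheory.AnalyticSet] at hA
  rcases hA with hA | ⟨g, hg, rfl⟩
  · subst hA; exact IsMeagre.empty.baireMeasurableSet
  classical
  set As : List ℕ → Set α := fun s => g '' cylN s with hAs
  choose B hB1 hB2 hB3 using fun s : List ℕ => exists_baire_hull (As s)
  set B' : List ℕ → Set α := fun s => B s ∩ closure (As s) with hB'
  have hB'1 : ∀ s, BaireMeasurableSet (B' s) := fun s =>
    (hB1 s).inter ((isClosed_closure (s := As s)).isOpen_compl.baireMeasurableSet.of_compl)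
  have hB'2 : ∀ s, As s ⊆ B' s := fun s =>
    subset_inter (hB2 s) subset_closure
  have hM : ∀ s, IsMeagre (B' s \ ⋃ k, B' (s ++ [k])) := by
    intro s
    have h1 : As s ⊆ ⋃ k, B' (s ++ [k]) := by
      rintro x ⟨z, hz, rfl⟩
      exact mem_iUnion.2 ⟨z s.length, hB'2 _ ⟨z, cylN_append_mem hz, rfl⟩⟩
    have h2 := hB3 s _ (BaireMeasurableSet.iUnion fun k => hB'1 (s ++ [k])) h1
    exact h2.mono (diff_subset_diff_left inter_subset_left)
  set M : Set α := ⋃ s : List ℕ, (B' s \ ⋃ k, B' (s ++ [k])) with hMdef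
  have hMmeag : IsMeagre M := isMeagre_iUnion' hM
  have hmain : B' [] \ M ⊆ range g := by
    rintro x₀ ⟨hx₀, hx₀M⟩
    have step : ∀ s : List ℕ, x₀ ∈ B' s → ∃ k, x₀ ∈ B' (s ++ [k]) := by
      intro s hs
      by_contra h
      push_neg at h
      exact hx₀M (mem_iUnion.2 ⟨s, hs, fun hmem => by
        obtain ⟨k, hk⟩ := mem_iUnion.1 hmem; exact h k hk⟩)
    set c : ℕ → {s : List ℕ // x₀ ∈ B' s} := fun n => Nat.rec ⟨[], hx₀⟩
      (fun _ p => ⟨p.1 ++ [Classical.choose (step p.1 p.2)],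
        Classical.choose_spec (step p.1 p.2)⟩) n with hc
    have hcsucc : ∀ n, ∃ k, (c (n + 1)).1 = (c n).1 ++ [k] := fun n =>
      ⟨Classical.choose (step (c n).1 (c n).2), rfl⟩
    have hlen : ∀ n, (c n).1.length = n := by
      intro n
      induction n with
      | zero => rfl
      | succ n ih =>
        obtain ⟨k, hk⟩ := hcsucc n
        simp [hk, ih]
    set y : ℕ → ℕ := fun n => (c (n + 1)).1.getD n 0 with hy
    have hcons : ∀ n, ∀ i, i < n → (c n).1.getD i 0 = y i := by
      intro n
      induction n with
      | zero => intro i hi; omega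
      | succ n ih =>
        intro i hi
        rcases Nat.lt_or_ge i n with h | h
        · obtain ⟨k, hk⟩ := hcsucc n
          rw [hk, List.getD_append _ _ _ _ (by rw [hlen n]; exact h)]
          exact ih i h
        · have : i = n := by omega
          subst this
          rfl
    have hcyl : ∀ n, cylN (c n).1 = {z | ∀ i, i < n → z i = y i} := by
      intro n
      ext z
      simp only [cylN, mem_setOf_eq, hlen n]
      exact ⟨fun h i hi => (h i hi).trans (hcons n i hi),
        fun h i hi => (h i hi).trans (hcons n i hi).symm⟩
    have hclos : ∀ n, x₀ ∈ closure (As (c n).1) := fun n => (c n).2.2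
    by_contra hx₀r
    have hne : g y ≠ x₀ := fun h => hx₀r ⟨y, h⟩
    have hopen : IsOpen ({x₀}ᶜ : Set α) := isClosed_singleton.isOpen_compl
    obtain ⟨V, hV, hVclosed, hVsub⟩ :=
      exists_mem_nhds_isClosed_subset (hopen.mem_nhds hne)
    have hgy : g y ∈ interior V := mem_interior_iff_mem_nhds.2 hV
    have hpre : IsOpen (g ⁻¹' interior V) := isOpen_interior.preimage hg
    obtain ⟨n, hn⟩ := pi_nbhd hpre (by exact hgy)
    have hsubW : As (c n).1 ⊆ interior V := by
      rintro x ⟨z, hz, rfl⟩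
      rw [hcyl n] at hz
      exact hn z hz
    have : x₀ ∈ V := by
      have h1 : closure (As (c n).1) ⊆ closure (interior V) :=
        closure_mono hsubW
      have h2 : closure (interior V) ⊆ V :=
        (closure_minimal interior_subset hVclosed)
      exact h2 (h1 (hclos n))
    exact hVsub this rfl
  have hrsub : range g ⊆ B' [] := by
    have : range g = As [] := by
      simp only [hAs]
      rw [show cylN [] = univ by ext z; simp [cylN], image_univ]
    rw [this]
    exact hB'2 []
  refine (hB'1 []).congr ?_
  rw [Filter.eventuallyEq_set]
  refine Filter.mem_of_superset hMmeag ?_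
  intro x hx
  simp only [mem_setOf_eq]
  constructor
  · intro hxB
    by_contra hxr
    exact hx (hmain ⟨hxB, hx⟩ |> fun h => absurd h hxr)
  · exact fun h => hrsub h


/-- In a product of discrete spaces over `ℕ`, cylinders around a point form a
neighborhood basis. -/
lemma pi_nbhd' {β : Type*} [TopologicalSpace β] [DiscreteTopology β] {U : Set (ℕ → β)}
    (hU : IsOpen U) {x : ℕ → β} (hx : x ∈ U) :
    ∃ n : ℕ, ∀ y : ℕ → β, (∀ i, i < n → y i = x i) → y ∈ U := by
  obtain ⟨I, u, hIu, hpi⟩ := isOpen_pi_iff.1 hU x hx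
  refine ⟨(I.sup id) + 1, fun y hy => hpi ?_⟩
  intro a ha
  have : a ≤ I.sup id := Finset.le_sup (f := id) ha
  rw [hy a (Nat.lt_succ_of_le this)]
  exact (hIu a ha).2

/-- Cylinder in Cantor space given by a finite list of bits. -/
def cylB (s : List Bool) : Set (ℕ → Bool) := {x | ∀ i, i < s.length → x i = s.getD i false}

lemma isOpen_cylB (s : List Bool) : IsOpen (cylB s) := by
  have : cylB s = ⋂ i ∈ Finset.range s.length, (fun x : ℕ → Bool => x i) ⁻¹' {s.getD i false} := by
    ext x; simp [cylB]
  rw [this]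
  exact isOpen_biInter_finset fun i _ =>
    (continuous_apply i).isOpen_preimage _ (isOpen_discrete _)

lemma cylB_nonempty (s : List Bool) : (cylB s).Nonempty :=
  ⟨fun i => s.getD i false, fun i _ => rfl⟩

lemma getD_ofFn {n : ℕ} (f : Fin n → Bool) {i : ℕ} (h : i < n) :
    (List.ofFn f).getD i false = f ⟨i, h⟩ := by
  rw [List.getD_eq_getElem _ _ (by simpa using h)]
  simp

lemma cylB_ofFn_eq (x : ℕ → Bool) (n : ℕ) :
    cylB (List.ofFn fun i : Fin n => x i) = {y | ∀ i, i < n → y i = x i} := by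
  ext y
  simp only [cylB, mem_setOf_eq, List.length_ofFn]
  constructor
  · intro h i hi
    rw [← getD_ofFn (fun i : Fin n => x i) hi]
    exact h i hi
  · intro h i hi
    rw [getD_ofFn (fun i : Fin n => x i) hi]
    exact h i hi

lemma cylB_ofFn_mem {n : ℕ} (a : Fin n → Bool) (x : ℕ → Bool) :
    x ∈ cylB (List.ofFn a) ↔ ∀ (i : ℕ) (h : i < n), x i = a ⟨i, h⟩ := by
  simp only [cylB, Set.mem_setOf_eq, List.length_ofFn]
  constructor
  · intro h i hi
    rw [← getD_ofFn a hi]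
    exact h i hi
  · intro h i hi
    rw [getD_ofFn a hi]
    exact h i hi

lemma cylB_append_subset (s t : List Bool) : cylB (s ++ t) ⊆ cylB s := by
  intro x hx i hi
  have := hx i (by simp; omega)
  rwa [List.getD_append _ _ _ _ hi] at this

lemma cylB_append_tail {u : List Bool} {x : ℕ → Bool} (hx : x ∈ cylB u) (n : ℕ) :
    cylB (u ++ List.ofFn fun i : Fin n => x (u.length + i)) =
      {y | ∀ i, i < u.length + n → y i = x i} := by
  ext y
  simp only [cylB, mem_setOf_eq, List.length_append, List.length_ofFn]
  constructor
  · intro h i hi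
    rcases Nat.lt_or_ge i u.length with hlt | hge
    · rw [h i (by omega), List.getD_append _ _ _ _ hlt]
      exact (hx i hlt).symm
    · have h2 := h i hi
      rw [List.getD_append_right _ _ _ _ hge,
        getD_ofFn _ (show i - u.length < n by omega)] at h2
      rw [h2]
      show x (u.length + (i - u.length)) = x i
      congr 1
      omega
  · intro h i hi
    rcases Nat.lt_or_ge i u.length with hlt | hge
    · rw [List.getD_append _ _ _ _ hlt, ← hx i hlt]
      exact h i (by omega)
    · rw [List.getD_append_right _ _ _ _ hge,
        getD_ofFn _ (show i - u.length < n by omega)]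
      show y i = x (u.length + (i - u.length))
      rw [h i hi]
      congr 1
      omega

/-- A box `cylB s ×ˢ cylB t` avoids the set `K`. -/
def Free (K : Set ((ℕ → Bool) × (ℕ → Bool))) (s t : List Bool) : Prop :=
  ∀ x y : ℕ → Bool, x ∈ cylB s → y ∈ cylB t → (x, y) ∉ K

lemma Free.mono_append {K : Set ((ℕ → Bool) × (ℕ → Bool))} {s t : List Bool}
    (h : Free K s t) (s' t' : List Bool) : Free K (s ++ s') (t ++ t') :=
  fun x y hx hy => h x y (cylB_append_subset _ _ hx) (cylB_append_subset _ _ hy)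

lemma Free.symm {K : Set ((ℕ → Bool) × (ℕ → Bool))}
    (hsym : ∀ a b, (a, b) ∈ K → (b, a) ∈ K) {s t : List Bool}
    (h : Free K s t) : Free K t s :=
  fun x y hx hy hK => h y x hy hx (hsym _ _ hK)

lemma ext_free {K : Set ((ℕ → Bool) × (ℕ → Bool))} (hK : IsClosed K) (hd : Dense Kᶜ)
    (u v : List Bool) :
    ∃ w1 w2 : List Bool, w1.length = w2.length ∧ Free K (u ++ w1) (v ++ w2) := by
  have hbox : IsOpen (cylB u ×ˢ cylB v) := (isOpen_cylB u).prod (isOpen_cylB v)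
  obtain ⟨⟨x, y⟩, ⟨hxu, hyv⟩, hKc⟩ :=
    hd.inter_open_nonempty _ hbox ((cylB_nonempty u).prod (cylB_nonempty v))
  -- nbhd of (x,y) inside Kᶜ
  obtain ⟨U, V, hU, hV, hxU, hyV, hUV⟩ := isOpen_prod_iff.1 hK.isOpen_compl x y hKc
  obtain ⟨n1, hn1⟩ := pi_nbhd' hU hxU
  obtain ⟨n2, hn2⟩ := pi_nbhd' hV hyV
  set n := max n1 n2 with hn
  refine ⟨List.ofFn fun i : Fin n => x (u.length + i),
          List.ofFn fun i : Fin n => y (v.length + i), by simp, ?_⟩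
  intro z1 z2 hz1 hz2 hKmem
  rw [cylB_append_tail hxu n] at hz1
  rw [cylB_append_tail hyv n] at hz2
  have h1 : z1 ∈ U := hn1 z1 fun i hi => hz1 i (by omega)
  have h2 : z2 ∈ V := hn2 z2 fun i hi => hz2 i (by omega)
  exact hUV (mk_mem_prod h1 h2) hKmem

lemma iterate_free {K : Set ((ℕ → Bool) × (ℕ → Bool))} (hK : IsClosed K) (hd : Dense Kᶜ)
    (L : List (List Bool × List Bool)) :
    ∃ e0 e1 : List Bool, e0.length = e1.length ∧
      ∀ p ∈ L, Free K (p.1 ++ e0) (p.2 ++ e1) := by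
  induction L with
  | nil => exact ⟨[], [], rfl, by simp⟩
  | cons p L ih =>
    obtain ⟨e0, e1, hlen, hall⟩ := ih
    obtain ⟨w1, w2, hwlen, hfree⟩ := ext_free hK hd (p.1 ++ e0) (p.2 ++ e1)
    refine ⟨e0 ++ w1, e1 ++ w2, by simp [hlen, hwlen], ?_⟩
    intro q hq
    rcases List.mem_cons.1 hq with rfl | hq
    · rw [← List.append_assoc, ← List.append_assoc]
      exact hfree
    · rw [← List.append_assoc, ← List.append_assoc]
      exact (hall q hq).mono_append _ _

/-- Iterated concatenation of chosen blocks along the bits of `a`. -/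
def sig (w : ℕ → Bool → List Bool) : ℕ → (ℕ → Bool) → List Bool
  | 0, _ => []
  | n + 1, a => sig w n a ++ w n (a n)

lemma sig_congr {w w' : ℕ → Bool → List Bool} {n : ℕ} (h : ∀ m, m < n → w m = w' m)
    (a : ℕ → Bool) : sig w n a = sig w' n a := by
  induction n with
  | zero => rfl
  | succ n ih =>
    simp only [sig]
    rw [ih (fun m hm => h m (by omega)), h n (by omega)]

lemma sig_congr_arg {w : ℕ → Bool → List Bool} {n : ℕ} {a b : ℕ → Bool}
    (h : ∀ m, m < n → a m = b m) : sig w n a = sig w n b := by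
  induction n with
  | zero => rfl
  | succ n ih =>
    simp only [sig]
    rw [ih (fun m hm => h m (by omega)), h n (by omega)]

lemma sig_length {w : ℕ → Bool → List Bool} (hlen : ∀ m, (w m false).length = (w m true).length)
    (n : ℕ) (a : ℕ → Bool) :
    (sig w n a).length = (sig w n (fun _ => false)).length := by
  induction n with
  | zero => rfl
  | succ n ih =>
    simp only [sig, List.length_append, ih]
    congr 1
    cases h : a n <;> simp [hlen n]

lemma stage_exists {K : Set ((ℕ → Bool) × (ℕ → Bool))} (hK : IsClosed K) (hd : Dense Kᶜ)
    (hsym : ∀ a b, (a, b) ∈ K → (b, a) ∈ K) (w : ℕ → Bool → List Bool) (n : ℕ) :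
    ∃ e : Bool → List Bool, (e false).length = (e true).length ∧ 0 < (e false).length ∧
      ∀ a b : ℕ → Bool, ∀ i j : Bool, i ≠ j →
        Free K (sig w n a ++ e i) (sig w n b ++ e j) := by
  classical
  set trunc : (Fin n → Bool) → (ℕ → Bool) :=
    fun v m => if h : m < n then v ⟨m, h⟩ else false with htrunc
  set F : ((Fin n → Bool) × (Fin n → Bool)) → (List Bool × List Bool) :=
    fun q => (sig w n (trunc q.1), sig w n (trunc q.2)) with hF
  set L : List (List Bool × List Bool) := (Finset.univ.image F).toList with hL
  have hmem : ∀ a b : ℕ → Bool, (sig w n a, sig w n b) ∈ L := by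
    intro a b
    have h1 : sig w n a = sig w n (trunc fun i : Fin n => a i) :=
      sig_congr_arg (fun m hm => by simp [htrunc, hm])
    have h2 : sig w n b = sig w n (trunc fun i : Fin n => b i) :=
      sig_congr_arg (fun m hm => by simp [htrunc, hm])
    rw [hL, Finset.mem_toList, Finset.mem_image]
    exact ⟨((fun i : Fin n => a i), (fun i : Fin n => b i)), Finset.mem_univ _,
      by rw [hF]; simp [← h1, ← h2]⟩
  obtain ⟨e0, e1, hlen, hall⟩ := iterate_free hK hd L
  refine ⟨fun b => (bif b then e1 else e0) ++ [false], by simp [hlen], by simp, ?_⟩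
  intro a b i j hij
  have hfree01 : ∀ a' b' : ℕ → Bool, Free K (sig w n a' ++ e0) (sig w n b' ++ e1) := by
    intro a' b'
    exact hall _ (hmem a' b')
  cases i <;> cases j <;> simp at hij ⊢
  · -- i = false, j = true
    rw [← List.append_assoc, ← List.append_assoc]
    exact (hfree01 a b).mono_append _ _
  · -- i = true, j = false
    rw [← List.append_assoc, ← List.append_assoc]
    exact ((hfree01 b a).symm hsym).mono_append _ _

lemma cantor_embed (K : ℕ → Set ((ℕ → Bool) × (ℕ → Bool)))
    (hcl : ∀ n, IsClosed (K n)) (hd : ∀ n, Dense (K n)ᶜ)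
    (hsym : ∀ n a b, (a, b) ∈ K n → (b, a) ∈ K n)
    (hmono : ∀ n m, n ≤ m → K n ⊆ K m) :
    ∃ g : (ℕ → Bool) → (ℕ → Bool), Continuous g ∧
      (∀ x y, E0 x y → E0 (g x) (g y)) ∧
      (∀ x y, ¬ E0 x y → ∀ n, (g x, g y) ∉ K n) := by
  classical
  set pick : (ℕ → Bool → List Bool) → ℕ → (Bool → List Bool) :=
    fun w n => Classical.choose (stage_exists (hcl n) (hd n) (hsym n) w n) with hpick
  set wOf : List (Bool → List Bool) → ℕ → Bool → List Bool :=
    fun l m => l.getD m (fun _ => []) with hwOf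
  set hist : ℕ → List (Bool → List Bool) :=
    fun n => Nat.rec [] (fun k l => l ++ [pick (wOf l) k]) n with hhist
  set w : ℕ → Bool → List Bool := fun n => pick (wOf (hist n)) n with hwdef
  have hist_succ : ∀ n, hist (n + 1) = hist n ++ [w n] := fun n => rfl
  have hist_len : ∀ n, (hist n).length = n := by
    intro n
    induction n with
    | zero => rfl
    | succ n ih => rw [hist_succ]; simp [ih]
  have wOf_hist : ∀ n m, m < n → wOf (hist n) m = w m := by
    intro n
    induction n with
    | zero => intro m hm; omega
    | succ n ih =>
      intro m hm
      rw [hist_succ]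
      rcases Nat.lt_or_ge m n with h | h
      · have : (wOf (hist n ++ [w n])) m = wOf (hist n) m := by
          simp only [hwOf]
          rw [List.getD_append _ _ _ _ (by rw [hist_len]; exact h)]
        rw [this]; exact ih m h
      · have hmn : m = n := by omega
        subst hmn
        simp only [hwOf]
        rw [List.getD_append_right _ _ _ _ (by rw [hist_len])]
        simp [hist_len]
  have hspec : ∀ n, (w n false).length = (w n true).length ∧ 0 < (w n false).length ∧
      ∀ a b : ℕ → Bool, ∀ i j : Bool, i ≠ j →
        Free (K n) (sig w n a ++ w n i) (sig w n b ++ w n j) := by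
    intro n
    have hs := Classical.choose_spec (stage_exists (hcl n) (hd n) (hsym n) (wOf (hist n)) n)
    have hsig : ∀ a, sig (wOf (hist n)) n a = sig w n a :=
      fun a => sig_congr (fun m hm => wOf_hist n m hm) a
    refine ⟨hs.1, hs.2.1, ?_⟩
    intro a b i j hij
    have := hs.2.2 a b i j hij
    rwa [hsig a, hsig b] at this
  have hw1 : ∀ n, (w n false).length = (w n true).length := fun n => (hspec n).1
  have hw2 : ∀ n, 0 < (w n false).length := fun n => (hspec n).2.1
  have hw3 : ∀ n a b i j, i ≠ j → Free (K n) (sig w n a ++ w n i) (sig w n b ++ w n j) :=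
    fun n a b i j hij => (hspec n).2.2 a b i j hij
  set ofs : ℕ → ℕ := fun n => (sig w n (fun _ => false)).length with hofs
  have sig_len : ∀ n a, (sig w n a).length = ofs n := fun n a => sig_length hw1 n a
  have ofs_succ : ∀ n, ofs (n + 1) = ofs n + (w n false).length := by
    intro n; simp [hofs, sig]
  have ofs_mono : Monotone ofs := monotone_nat_of_le_succ (fun n => by rw [ofs_succ]; omega)
  have ofs_strict : ∀ n, ofs n < ofs (n + 1) := fun n => by
    rw [ofs_succ]; have := hw2 n; omega
  have ofs_ge : ∀ n, n ≤ ofs n := by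
    intro n
    induction n with
    | zero => omega
    | succ n ih => have := ofs_strict n; omega
  have hex : ∀ i : ℕ, ∃ n, i < ofs (n + 1) := fun i => ⟨i, by have := ofs_ge (i + 1); omega⟩
  set idx : ℕ → ℕ := fun i => Nat.find (hex i) with hidx
  have idx_lt : ∀ i, i < ofs (idx i + 1) := fun i => Nat.find_spec (hex i)
  have idx_le : ∀ i, ofs (idx i) ≤ i := by
    intro i
    rcases Nat.eq_zero_or_pos (idx i) with h | h
    · rw [h]; simp [hofs, sig]
    · have hlt : idx i - 1 < idx i := by omega
      have := Nat.find_min (hex i) hlt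
      have h2 : idx i - 1 + 1 = idx i := by omega
      rw [h2] at this
      omega
  have idx_eq : ∀ i n, ofs n ≤ i → i < ofs (n + 1) → idx i = n := by
    intro i n h1 h2
    refine le_antisymm (Nat.find_le h2) ?_
    by_contra h
    push_neg at h
    have : ofs (idx i + 1) ≤ ofs n := ofs_mono (by omega)
    have := idx_lt i
    omega
  set g : (ℕ → Bool) → (ℕ → Bool) :=
    fun x i => (w (idx i) (x (idx i))).getD (i - ofs (idx i)) false with hg
  have g_mem : ∀ x n, g x ∈ cylB (sig w n x) := by
    intro x n
    induction n with
    | zero => intro i hi; simp [sig] at hi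
    | succ n ih =>
      intro i hi
      rw [sig_len] at hi
      show g x i = (sig w n x ++ w n (x n)).getD i false
      rcases Nat.lt_or_ge i (ofs n) with h | h
      · rw [List.getD_append _ _ _ _ (by rw [sig_len]; exact h)]
        exact ih i (by rw [sig_len]; exact h)
      · rw [List.getD_append_right _ _ _ _ (by rw [sig_len]; exact h)]
        have hidxi : idx i = n := idx_eq i n h hi
        simp only [hg, hidxi, sig_len]
  have g_cont : Continuous g := by
    apply continuous_pi
    intro i
    show Continuous ((fun b : Bool => (w (idx i) b).getD (i - ofs (idx i)) false) ∘
      fun x : ℕ → Bool => x (idx i))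
    exact Continuous.comp (continuous_of_discreteTopology) (continuous_apply (idx i))
  refine ⟨g, g_cont, ?_, ?_⟩
  · rintro x y ⟨N, hN⟩
    refine ⟨ofs N, fun i hi => ?_⟩
    have hn : N ≤ idx i := by
      by_contra h
      push_neg at h
      have : ofs (idx i + 1) ≤ ofs N := ofs_mono (by omega)
      have := idx_lt i
      omega
    have hxy : x (idx i) = y (idx i) := hN (idx i) hn
    simp only [hg, hxy]
  · intro x y hxy n
    have hne : ∀ N, ∃ m, N ≤ m ∧ x m ≠ y m := by
      intro N
      by_contra h
      push_neg at h
      exact hxy ⟨N, fun m hm => h m hm⟩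
    obtain ⟨m, hm, hne'⟩ := hne n
    intro hK
    have hKm : (g x, g y) ∈ K m := hmono n m hm hK
    exact hw3 m x y (x m) (y m) hne' (g x) (g y) (g_mem x (m + 1)) (g_mem y (m + 1)) hKm

open MeasureTheory

lemma dense_of_cyl {D : Set (ℕ → Bool)} (h : ∀ s : List Bool, (D ∩ cylB s).Nonempty) :
    Dense D := by
  rw [dense_iff_inter_open]
  rintro V hV ⟨x, hx⟩
  obtain ⟨n, hn⟩ := pi_nbhd' hV hx
  obtain ⟨z, hzD, hzc⟩ := h (List.ofFn fun i : Fin n => x i)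
  rw [cylB_ofFn_eq] at hzc
  exact ⟨z, hn z hzc, hzD⟩

/-- Half of the Kuratowski–Ulam theorem, for the Cantor space. -/
lemma ku_half {W : Set ((ℕ → Bool) × (ℕ → Bool))} (hW : W ∈ residual _) :
    {x : ℕ → Bool | {y : ℕ → Bool | (x, y) ∈ W} ∈ residual (ℕ → Bool)} ∈
      residual (ℕ → Bool) := by
  obtain ⟨t, htW, htGδ, htd⟩ := mem_residual.1 hW
  obtain ⟨S, hSopen, hScnt, rfl⟩ := htGδ
  have hud : ∀ u ∈ S, Dense u := fun u hu => htd.mono (Set.sInter_subset_of_mem hu)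
  set D : Set ((ℕ → Bool) × (ℕ → Bool)) → List Bool → Set (ℕ → Bool) :=
    fun u s => Prod.fst '' (u ∩ ((Set.univ : Set (ℕ → Bool)) ×ˢ cylB s)) with hD
  have hDopen : ∀ u ∈ S, ∀ s, IsOpen (D u s) := fun u hu s =>
    isOpenMap_fst _ ((hSopen u hu).inter (isOpen_univ.prod (isOpen_cylB s)))
  have hDdense : ∀ u ∈ S, ∀ s, Dense (D u s) := by
    intro u hu s
    rw [dense_iff_inter_open]
    intro V hV hVne
    obtain ⟨⟨a, b⟩, ⟨haV, hbs⟩, hab⟩ := (hud u hu).inter_open_nonempty (V ×ˢ cylB s)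
      (hV.prod (isOpen_cylB s)) (hVne.prod (cylB_nonempty s))
    exact ⟨a, haV, ⟨(a, b), ⟨hab, ⟨Set.mem_univ _, hbs⟩⟩, rfl⟩⟩
  have hA : (⋂ u ∈ S, ⋂ s : List Bool, D u s) ∈ residual (ℕ → Bool) :=
    (countable_bInter_mem hScnt).2 fun u hu =>
      countable_iInter_mem.2 fun s => residual_of_dense_open (hDopen u hu s) (hDdense u hu s)
  refine Filter.mem_of_superset hA ?_
  intro x hx
  simp only [Set.mem_iInter] at hx
  have hsec : ∀ u ∈ S, {y : ℕ → Bool | (x, y) ∈ u} ∈ residual (ℕ → Bool) := by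
    intro u hu
    refine residual_of_dense_open ((hSopen u hu).preimage (Continuous.prodMk_right x)) ?_
    apply dense_of_cyl
    intro s
    obtain ⟨⟨x', y⟩, ⟨hu', ⟨-, hys⟩⟩, hfst⟩ := hx u hu s
    refine ⟨y, ?_, hys⟩
    have : x' = x := hfst
    rw [← this]
    exact hu'
  have hT : {y : ℕ → Bool | (x, y) ∈ ⋂₀ S} ∈ residual (ℕ → Bool) := by
    have : {y : ℕ → Bool | (x, y) ∈ ⋂₀ S} = ⋂ u ∈ S, {y : ℕ → Bool | (x, y) ∈ u} := by
      ext y; simp [Set.mem_sInter]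
    rw [this]
    exact (countable_bInter_mem hScnt).2 hsec
  exact Filter.mem_of_superset hT fun y hy => htW hy

/-- Flip the first `n` coordinates according to the mask `c`. -/
def flipC (c : ℕ → Bool) (n : ℕ) (x : ℕ → Bool) : ℕ → Bool :=
  fun i => if i < n then xor (x i) (c i) else x i

lemma flipC_cont (c : ℕ → Bool) (n : ℕ) : Continuous (flipC c n) := by
  apply continuous_pi
  intro i
  show Continuous ((fun b : Bool => if i < n then xor b (c i) else b) ∘
    fun x : ℕ → Bool => x i)
  exact Continuous.comp (continuous_of_discreteTopology) (continuous_apply i)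

lemma flipC_invol (c : ℕ → Bool) (n : ℕ) (x : ℕ → Bool) :
    flipC c n (flipC c n x) = x := by
  funext i
  by_cases h : i < n
  · cases hx : x i <;> cases hc : c i <;> simp [flipC, h, hx, hc]
  · simp [flipC, h]

lemma flipC_isOpenMap (c : ℕ → Bool) (n : ℕ) : IsOpenMap (flipC c n) := by
  intro U hU
  have : flipC c n '' U = flipC c n ⁻¹' U := by
    ext z
    constructor
    · rintro ⟨x, hx, rfl⟩
      simpa [flipC_invol] using hx
    · intro hz
      exact ⟨flipC c n z, hz, flipC_invol c n z⟩
  rw [this]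
  exact hU.preimage (flipC_cont c n)

lemma flipC_E0 (c : ℕ → Bool) (n : ℕ) (x : ℕ → Bool) : E0 (flipC c n x) x :=
  ⟨n, fun m hm => if_neg (by omega)⟩

lemma E0_refl (x : ℕ → Bool) : E0 x x := ⟨0, fun _ _ => rfl⟩

lemma E0_symm {x y : ℕ → Bool} (h : E0 x y) : E0 y x := by
  obtain ⟨N, hN⟩ := h
  exact ⟨N, fun n hn => (hN n hn).symm⟩

lemma analyticSet_inter {α : Type*} [TopologicalSpace α] [T2Space α] {s t : Set α}
    (hs : AnalyticSet s) (ht : AnalyticSet t) : AnalyticSet (s ∩ t) := by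
  have h := AnalyticSet.iInter (ι := Bool) (s := fun b => bif b then s else t)
    (fun b => by cases b <;> simpa)
  have heq : (⋂ b : Bool, (bif b then s else t)) = s ∩ t := by
    ext z
    simp only [Set.mem_iInter, Bool.forall_bool, cond_false, cond_true, Set.mem_inter_iff]
    exact ⟨fun h => ⟨h.2, h.1⟩, fun h => ⟨h.2, h.1⟩⟩
  rwa [heq] at h

end Auxiliary

/-- Dichotomy for homomorphisms from `E₀`: for any analytic equivalence relation `E` on a
Polish space, either `E₀ ≤_B E`, or every Borel homomorphism from `E₀` to `E` maps a
comeager subset of `2^ℕ` into a single `E`-class. -/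
theorem E0_homomorphism_dichotomy {Y : Type*}
    [TopologicalSpace Y] [PolishSpace Y] [MeasurableSpace Y] [BorelSpace Y]
    (E : Set (Y × Y)) (hAnal : AnalyticSet E)
    (hEquiv : Equivalence (fun a b => (a, b) ∈ E)) :
    (∃ f : (ℕ → Bool) → Y, Measurable f ∧ ∀ x y, E0 x y ↔ (f x, f y) ∈ E) ∨
    (∀ f : (ℕ → Bool) → Y, Measurable f → (∀ x y, E0 x y → (f x, f y) ∈ E) →
      ∃ C ∈ residual (ℕ → Bool), ∃ a : Y, ∀ x ∈ C, (f x, a) ∈ E) := by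
  classical
  by_cases hred : ∃ f : (ℕ → Bool) → Y, Measurable f ∧ ∀ x y, E0 x y ↔ (f x, f y) ∈ E
  · exact Or.inl hred
  right
  intro f hf hhom
  set F : Set ((ℕ → Bool) × (ℕ → Bool)) :=
    (fun p : (ℕ → Bool) × (ℕ → Bool) => (f p.1, f p.2)) ⁻¹' E with hFdef
  have hFmem : ∀ p : (ℕ → Bool) × (ℕ → Bool), p ∈ F ↔ (f p.1, f p.2) ∈ E := fun p => Iff.rfl
  -- F is analytic
  have hFanal : AnalyticSet F := by
    have hmap : Measurable (fun p : (ℕ → Bool) × (ℕ → Bool) => (f p.1, f p.2)) :=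
      (hf.comp measurable_fst).prodMk (hf.comp measurable_snd)
    have hG1 : MeasurableSet {q : ((ℕ → Bool) × (ℕ → Bool)) × (Y × Y) |
        (f q.1.1, f q.1.2) = q.2} := by
      have hm : Measurable (fun q : ((ℕ → Bool) × (ℕ → Bool)) × (Y × Y) =>
          (((f q.1.1, f q.1.2) : Y × Y), q.2)) :=
        (hmap.comp measurable_fst).prodMk measurable_snd
      exact hm (isClosed_diagonal.measurableSet)
    have : PolishSpace Bool := inferInstance
    have hG2 : AnalyticSet {q : ((ℕ → Bool) × (ℕ → Bool)) × (Y × Y) | q.2 ∈ E} :=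
      hAnal.preimage continuous_snd
    have hGanal : AnalyticSet ({q : ((ℕ → Bool) × (ℕ → Bool)) × (Y × Y) |
        (f q.1.1, f q.1.2) = q.2} ∩ {q | q.2 ∈ E}) :=
      analyticSet_inter (hG1.analyticSet) hG2
    have himg : F = Prod.fst '' ({q : ((ℕ → Bool) × (ℕ → Bool)) × (Y × Y) |
        (f q.1.1, f q.1.2) = q.2} ∩ {q | q.2 ∈ E}) := by
      ext p
      constructor
      · intro hp
        exact ⟨(p, (f p.1, f p.2)), ⟨rfl, hp⟩, rfl⟩
      · rintro ⟨q, ⟨hq1, hq2⟩, rfl⟩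
        show (f q.1.1, f q.1.2) ∈ E
        rw [hq1]
        exact hq2
    rw [himg]
    exact hGanal.image_of_continuous continuous_fst
  -- F is invariant under E0 in each coordinate
  have hFinv : ∀ x x' y y', E0 x x' → E0 y y' → (x, y) ∈ F → (x', y') ∈ F := by
    intro x x' y y' hxx hyy hxy
    have h1 : (f x', f x) ∈ E := hhom x' x (E0_symm hxx)
    have h2 : (f y, f y') ∈ E := hhom y y' hyy
    exact hEquiv.trans (hEquiv.trans h1 hxy) h2
  have hFsymm : ∀ a b, (a, b) ∈ F → (b, a) ∈ F := fun a b h => hEquiv.symm h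
  -- F is not meager (else we could build a reduction, contradicting hred)
  have hFnm : ¬ IsMeagre F := by
    intro hmeag
    rw [isMeagre_iff_countable_union_isNowhereDense] at hmeag
    obtain ⟨S, hS_nwd, hS_cnt, hS_sub⟩ := hmeag
    obtain ⟨e, he⟩ := Set.Countable.exists_eq_range (hS_cnt.insert ∅)
      (Set.insert_nonempty _ _)
    have he_nwd : ∀ m, IsNowhereDense (e m) := by
      intro m
      have : e m ∈ insert ∅ S := by rw [he]; exact Set.mem_range_self m
      rcases this with h | h
      · rw [h]
        show interior (closure (∅ : Set ((ℕ → Bool) × (ℕ → Bool)))) = ∅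
        simp
      · exact hS_nwd _ h
    set K : ℕ → Set ((ℕ → Bool) × (ℕ → Bool)) :=
      fun n => ⋃ m ∈ Finset.range (n + 1),
        (closure (e m) ∪ Prod.swap ⁻¹' closure (e m)) with hK
    have hKcl : ∀ n, IsClosed (K n) := by
      intro n
      apply Set.Finite.isClosed_biUnion (Finset.finite_toSet _)
      intro m _
      exact isClosed_closure.union (isClosed_closure.preimage continuous_swap)
    have hKd : ∀ n, Dense (K n)ᶜ := by
      intro n
      apply dense_of_mem_residual
      have : (K n)ᶜ = ⋂ m ∈ Finset.range (n + 1),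
          ((closure (e m))ᶜ ∩ (Prod.swap ⁻¹' closure (e m))ᶜ) := by
        rw [hK]
        simp [Set.compl_iUnion, Set.compl_union]
      rw [this]
      refine (countable_bInter_mem (Finset.range (n + 1) : Finset ℕ).countable_toSet).2 ?_
      intro m _
      refine Filter.inter_mem ?_ ?_
      · refine residual_of_dense_open isClosed_closure.isOpen_compl ?_
        rw [← interior_eq_empty_iff_dense_compl]
        exact he_nwd m
      · have hd : Dense (closure (e m))ᶜ := by
          rw [← interior_eq_empty_iff_dense_compl]
          exact he_nwd m
        have : (Prod.swap ⁻¹' closure (e m))ᶜ =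
            Prod.swap ⁻¹' (closure (e m))ᶜ := by rw [Set.preimage_compl]
        rw [this]
        exact residual_of_dense_open
          (isClosed_closure.isOpen_compl.preimage continuous_swap)
          (hd.preimage (Homeomorph.prodComm _ _).isOpenMap)
    have hKsym : ∀ n a b, (a, b) ∈ K n → (b, a) ∈ K n := by
      intro n a b h
      rw [hK] at h ⊢
      simp only [Set.mem_iUnion] at h ⊢
      obtain ⟨m, hm, h⟩ := h
      refine ⟨m, hm, ?_⟩
      rcases h with h | h
      · exact Or.inr h
      · exact Or.inl h
    have hKmono : ∀ n m, n ≤ m → K n ⊆ K m := by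
      intro n m hnm p hp
      rw [hK] at hp ⊢
      simp only [Set.mem_iUnion] at hp ⊢
      obtain ⟨k, hk, h⟩ := hp
      exact ⟨k, Finset.mem_range.2 (by have := Finset.mem_range.1 hk; omega), h⟩
    have hFK : ∀ p ∈ F, ∃ n, p ∈ K n := by
      intro p hp
      obtain ⟨s, hsS, hps⟩ := hS_sub hp
      have : s ∈ Set.range e := by rw [← he]; exact Set.mem_insert_of_mem _ hsS
      obtain ⟨m, rfl⟩ := this
      refine ⟨m, ?_⟩
      rw [hK]
      simp only [Set.mem_iUnion]
      exact ⟨m, Finset.mem_range.2 (by omega), Or.inl (subset_closure hps)⟩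
    obtain ⟨g, hgcont, hgE0, hgavoid⟩ := cantor_embed K hKcl hKd hKsym hKmono
    apply hred
    refine ⟨f ∘ g, hf.comp hgcont.measurable, ?_⟩
    intro x y
    constructor
    · intro hxy
      exact hhom _ _ (hgE0 x y hxy)
    · intro hE
      by_contra hxy
      have hgF : (g x, g y) ∈ F := hE
      obtain ⟨n, hn⟩ := hFK _ hgF
      exact hgavoid x y hxy n hn
  -- Case A : F is non-meager, hence comeager; use Kuratowski-Ulam
  have hFbm : BaireMeasurableSet F := analyticSet_baireMeasurable hFanal
  obtain ⟨U, hUopen, hFU⟩ := hFbm.residualEq_isOpen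
  have hiff : {p : (ℕ → Bool) × (ℕ → Bool) | p ∈ F ↔ p ∈ U} ∈ residual _ := by
    rw [Filter.eventuallyEq_set] at hFU; exact hFU
  have hUne : U.Nonempty := by
    rcases Set.eq_empty_or_nonempty U with h | h
    · exfalso
      apply hFnm
      refine Filter.mem_of_superset hiff ?_
      intro p hp
      simp only [Set.mem_setOf_eq] at hp
      intro hpF
      rw [h] at hp
      exact (hp.1 hpF)
    · exact h
  obtain ⟨⟨x₀, y₀⟩, hU0⟩ := hUne
  obtain ⟨u, v, huo, hvo, hxu, hyv, huv⟩ := isOpen_prod_iff.1 hUopen x₀ y₀ hU0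
  obtain ⟨n1, hn1⟩ := pi_nbhd' huo hxu
  obtain ⟨n2, hn2⟩ := pi_nbhd' hvo hyv
  set n := max n1 n2 with hn
  have hboxU : ∀ x y : ℕ → Bool, (∀ i, i < n → x i = x₀ i) → (∀ i, i < n → y i = y₀ i) →
      (x, y) ∈ U := by
    intro x y hx hy
    exact huv (Set.mk_mem_prod (hn1 x fun i hi => hx i (by omega))
      (hn2 y fun i hi => hy i (by omega)))
  -- the base box is comeager in F
  have hbox_meag : IsMeagre
      ((cylB (List.ofFn fun i : Fin n => x₀ i) ×ˢ cylB (List.ofFn fun i : Fin n => y₀ i)) \ F) := by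
    refine Filter.mem_of_superset hiff ?_
    intro p hp
    simp only [Set.mem_setOf_eq] at hp
    simp only [Set.mem_compl_iff, Set.mem_diff, not_and, not_not]
    rintro ⟨hp1, hp2⟩
    rw [cylB_ofFn_eq] at hp1 hp2
    exact hp.2 (hboxU p.1 p.2 hp1 hp2)
  -- every box of level n is comeager in F
  have hall : ∀ a b : Fin n → Bool,
      IsMeagre ((cylB (List.ofFn fun i : Fin n => a i) ×ˢ
        cylB (List.ofFn fun i : Fin n => b i)) \ F) := by
    intro a b
    set c1 : ℕ → Bool := fun i => if h : i < n then xor (a ⟨i, h⟩) (x₀ i) else false with hc1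
    set c2 : ℕ → Bool := fun i => if h : i < n then xor (b ⟨i, h⟩) (y₀ i) else false with hc2
    have hmeag2 := hbox_meag.preimage_of_isOpenMap
      ((flipC_cont c1 n).prodMap (flipC_cont c2 n))
      ((flipC_isOpenMap c1 n).prodMap (flipC_isOpenMap c2 n))
    refine hmeag2.mono ?_
    rintro ⟨x, y⟩ ⟨⟨hxa, hyb⟩, hnF⟩
    rw [cylB_ofFn_mem] at hxa hyb
    rw [Set.mem_preimage]
    have hmapeq : Prod.map (flipC c1 n) (flipC c2 n) (x, y) =
        (flipC c1 n x, flipC c2 n y) := rfl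
    rw [hmapeq]
    refine ⟨⟨?_, ?_⟩, ?_⟩
    · rw [cylB_ofFn_eq]
      intro i hi
      show (if i < n then xor (x i) (c1 i) else x i) = x₀ i
      rw [if_pos hi]
      have hxai : x i = a ⟨i, hi⟩ := hxa i hi
      rw [hxai, hc1]
      simp only [dif_pos hi]
      cases a ⟨i, hi⟩ <;> cases x₀ i <;> rfl

    · rw [cylB_ofFn_eq]
      intro i hi
      show (if i < n then xor (y i) (c2 i) else y i) = y₀ i
      rw [if_pos hi]
      have hybi : y i = b ⟨i, hi⟩ := hyb i hi
      rw [hybi, hc2]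
      simp only [dif_pos hi]
      cases b ⟨i, hi⟩ <;> cases y₀ i <;> rfl
    · intro hφF
      exact hnF (hFinv _ x _ y (flipC_E0 c1 n x) (flipC_E0 c2 n y) hφF)
  -- F is comeager
  have hFres : F ∈ residual ((ℕ → Bool) × (ℕ → Bool)) := by
    have hcov : Fᶜ ⊆ ⋃ q : (Fin n → Bool) × (Fin n → Bool),
        ((cylB (List.ofFn fun i : Fin n => q.1 i) ×ˢ
          cylB (List.ofFn fun i : Fin n => q.2 i)) \ F) := by
      intro p hp
      refine Set.mem_iUnion.2 ⟨(fun i : Fin n => p.1 i, fun i : Fin n => p.2 i), ?_, hp⟩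
      rw [Set.mem_prod, cylB_ofFn_eq, cylB_ofFn_eq]
      exact ⟨fun i _ => rfl, fun i _ => rfl⟩
    have hmeagc2 : IsMeagre (⋃ q : (Fin n → Bool) × (Fin n → Bool),
        ((cylB (List.ofFn fun i : Fin n => q.1 i) ×ˢ
          cylB (List.ofFn fun i : Fin n => q.2 i)) \ F)) :=
      isMeagre_iUnion' (fun q => hall q.1 q.2)
    have hmeagc : IsMeagre (Fᶜ) := hmeagc2.mono hcov
    rw [IsMeagre, compl_compl] at hmeagc
    exact hmeagc
  -- Kuratowski-Ulam: comeager many x have comeager section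
  have hsec := ku_half hFres
  obtain ⟨x₁, hx₁⟩ := (dense_of_mem_residual hsec).nonempty
  refine ⟨{x : ℕ → Bool | {y : ℕ → Bool | (x, y) ∈ F} ∈ residual (ℕ → Bool)}, hsec, f x₁, ?_⟩
  intro x hx
  have hsecs : ({y : ℕ → Bool | (x, y) ∈ F} ∩ {y : ℕ → Bool | (x₁, y) ∈ F}) ∈
      residual (ℕ → Bool) := Filter.inter_mem hx hx₁
  obtain ⟨y, hy1, hy2⟩ := (dense_of_mem_residual hsecs).nonempty
  have h1 : (f x, f y) ∈ E := hy1
  have h2 : (f x₁, f y) ∈ E := hy2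
  exact hEquiv.trans h1 (hEquiv.symm h2)
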